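/- (Inequality (2.4)): Fix ω ∈ (0,1), a nondecreasing sequence of positive reals a = (a_k)_{k≥1} and positive reals b = (b_k)_{k≥1} with b_* := inf_k b_k > 0, and set M_1 := 2·Σ_{j=1}^∞ ω^{a_1 (j^{b_*}−1)} (finite). Then for every d ∈ ℕ (d ≥ 1): (ω^{a_1} ln 2)/2 ≤ (ln 2 / 2)·Σ_{k=1}^d ω^{a_k} ≤ (1/2)·ln( Σ_{h∈ℤ^d} ω_h ) ≤ (M_1/2)·Σ_{k=1}^d ω^{a_k} ≤ d·M_1·ω^{a_1}/2, where ω_h := ω^{Σ_{k=1}^d a_k|h_k|^{b_k}} and the family (ω_h)_{h∈ℤ^d} is summable. In particular the average-case initial error e^{avg}(0,d) = (Σ_{h∈ℤ^d} ω_h)^{1/2} satisfies these two-sided bounds on its logarithm. -/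

import Mathlib

noncomputable section

/-- The exponent sum `∑_{k=1}^d a_k |h_k|^{b_k}` (0-indexed sequences). -/
def korSum (a b : ℕ → ℝ) (d : ℕ) (h : Fin d → ℤ) : ℝ :=
  ∑ k : Fin d, a k.1 * (|h k| : ℝ) ^ (b k.1)

/-- The eigenvalue `ω_h = ω^{∑_{k=1}^d a_k |h_k|^{b_k}}`. -/
def wfun (ω : ℝ) (a b : ℕ → ℝ) (d : ℕ) (h : Fin d → ℤ) : ℝ :=
  ω ^ (korSum a b d h)

open Real Filter Asymptotics

lemma rpow_finset_sum {ω : ℝ} (hω : 0 < ω) {ι : Type*} (s : Finset ι) (f : ι → ℝ) :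
    ω ^ (∑ i ∈ s, f i) = ∏ i ∈ s, ω ^ (f i) := by
  classical
  induction s using Finset.cons_induction with
  | empty => simp
  | cons i s hi ih => rw [Finset.sum_cons, Finset.prod_cons, Real.rpow_add hω, ih]

lemma aux_summable {ω : ℝ} (hω0 : 0 < ω) (hω1 : ω < 1) {c β : ℝ} (hc : 0 < c) (hβ : 0 < β) :
    Summable (fun j : ℕ => ω ^ (c * ((j : ℝ) + 1) ^ β)) := by
  have hlog : Real.log ω < 0 := Real.log_neg hω0 hω1
  set μ := c * (-Real.log ω) with hμ
  have hμ0 : 0 < μ := mul_pos hc (neg_pos.2 hlog)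
  apply summable_of_isBigO_nat (g := fun n : ℕ => (n : ℝ) ^ (-2 : ℝ))
    (summable_nat_rpow.mpr (by norm_num))
  rw [isBigO_iff]
  refine ⟨1, ?_⟩
  have h1 : ∀ᶠ x : ℝ in atTop, ‖Real.log x‖ ≤ μ / 2 * ‖x ^ β‖ :=
    (isLittleO_log_rpow_atTop hβ).bound (by positivity)
  have h2 : ∀ᶠ n : ℕ in atTop, ‖Real.log (n : ℝ)‖ ≤ μ / 2 * ‖(n : ℝ) ^ β‖ :=
    tendsto_natCast_atTop_atTop.eventually h1
  filter_upwards [h2, eventually_ge_atTop 1] with n hn hn1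
  have hn0 : (1 : ℝ) ≤ (n : ℝ) := by exact_mod_cast hn1
  have hβn : (0:ℝ) ≤ (n : ℝ) ^ β := Real.rpow_nonneg (by linarith) β
  have hlogn : 0 ≤ Real.log (n : ℝ) := Real.log_nonneg hn0
  rw [Real.norm_eq_abs, abs_of_nonneg hlogn, Real.norm_eq_abs, abs_of_nonneg hβn] at hn
  have key : 2 * Real.log (n : ℝ) ≤ μ * ((n : ℝ) + 1) ^ β := by
    have : (n : ℝ) ^ β ≤ ((n : ℝ) + 1) ^ β :=
      Real.rpow_le_rpow (by linarith) (by linarith) hβ.le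
    nlinarith
  have hsub : ω ^ (c * ((n : ℝ) + 1) ^ β) = Real.exp (-(μ * ((n:ℝ)+1) ^ β)) := by
    rw [Real.rpow_def_of_pos hω0]; congr 1; rw [hμ]; ring
  rw [hsub, Real.norm_eq_abs, abs_of_nonneg (Real.exp_nonneg _), one_mul,
    Real.norm_eq_abs, abs_of_nonneg (Real.rpow_nonneg (by positivity) _),
    Real.rpow_def_of_pos (by linarith : (0:ℝ) < (n:ℝ))]
  exact Real.exp_le_exp.mpr (by nlinarith)

lemma hasSum_pi_prod : ∀ (d : ℕ) (g : Fin d → ℤ → ℝ) (S : Fin d → ℝ),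
    (∀ k x, 0 ≤ g k x) → (∀ k, HasSum (g k) (S k)) →
    HasSum (fun h : Fin d → ℤ => ∏ k, g k (h k)) (∏ k, S k) := by
  intro d
  induction d with
  | zero =>
    intro g S _ _
    have h1 : (fun h : Fin 0 → ℤ => ∏ k, g k (h k)) = fun _ => 1 := by
      funext h; simp
    rw [h1]
    have := hasSum_single (f := fun _ : (Fin 0 → ℤ) => (1:ℝ)) (fun i => i.elim0)
      (fun b hb => absurd (funext fun i => i.elim0) hb)
    simpa using this
  | succ n ih =>
    intro g S hnn hs
    have h2 := ih (fun k => g k.succ) (fun k => S k.succ) (fun k x => hnn k.succ x)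
      (fun k => hs k.succ)
    set F : (Fin n → ℤ) → ℝ := fun h => ∏ k : Fin n, g k.succ (h k) with hF
    have hbF : (0 : (Fin n → ℤ) → ℝ) ≤ F := fun y => by
      simp only [hF]; exact Finset.prod_nonneg fun k _ => hnn _ _
    have hsum : Summable (fun p : ℤ × (Fin n → ℤ) => g 0 p.1 * F p.2) :=
      Summable.mul_of_nonneg (hs 0).summable h2.summable (fun x => hnn 0 x) hbF
    have hpair : HasSum (fun p : ℤ × (Fin n → ℤ) => g 0 p.1 * F p.2)
        (S 0 * ∏ k : Fin n, S k.succ) := by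
      have heq := (hs 0).mul_eq h2 hsum.hasSum
      rw [heq]; exact hsum.hasSum
    rw [Fin.prod_univ_succ]
    rw [← (Fin.consEquiv (fun _ : Fin (n+1) => ℤ)).hasSum_iff]
    convert hpair using 1
    funext p
    simp only [Function.comp_apply, Fin.consEquiv_apply, Fin.prod_univ_succ, Fin.cons_zero,
      Fin.cons_succ, hF]

lemma coord_hasSum {ω : ℝ} (hω0 : 0 < ω) (hω1 : ω < 1) {c βk : ℝ} (hc : 0 < c) (hβk : 0 < βk) :
    HasSum (fun x : ℤ => ω ^ (c * (|x| : ℝ) ^ βk))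
      (1 + 2 * ∑' j : ℕ, ω ^ (c * ((j : ℝ) + 1) ^ βk)) := by
  set f : ℤ → ℝ := fun x => ω ^ (c * (|x| : ℝ) ^ βk) with hf
  set u : ℕ → ℝ := fun n => ω ^ (c * ((n : ℝ) + 1) ^ βk) with hu
  have hu_s : Summable u := aux_summable hω0 hω1 hc hβk
  have hshift : ∀ n : ℕ, f ((n : ℤ) + 1) = u n := by
    intro n
    simp only [hf, hu]
    congr 2
    push_cast
    rw [abs_of_nonneg (by positivity : (0:ℝ) ≤ (n : ℝ) + 1)]
  have h1 : Summable (fun n : ℕ => f n) := by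
    rw [← summable_nat_add_iff 1]
    refine hu_s.congr fun n => ?_
    rw [← hshift n]
    push_cast
    ring_nf
  have hneg : ∀ n : ℕ, f (-((n : ℤ) + 1)) = u n := by
    intro n
    rw [show f (-((n : ℤ) + 1)) = f ((n : ℤ) + 1) by
      simp only [hf]; push_cast; rw [abs_neg], hshift]
  have h2 : Summable (fun n : ℕ => f (-((n : ℤ) + 1))) := hu_s.congr fun n => (hneg n).symm
  have hsummable : Summable f := Summable.of_nat_of_neg_add_one h1 h2
  have htsum : ∑' x : ℤ, f x = 1 + 2 * ∑' j : ℕ, u j := by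
    rw [tsum_of_nat_of_neg_add_one h1 h2]
    have ha : ∑' n : ℕ, f n = 1 + ∑' n : ℕ, u n := by
      rw [Summable.tsum_eq_zero_add h1]
      congr 1
      · simp only [hf]
        norm_num
        rw [Real.zero_rpow hβk.ne', mul_zero, Real.rpow_zero]
      · refine tsum_congr fun n => ?_
        rw [← hshift n]
        push_cast
        ring_nf
    have hb : ∑' n : ℕ, f (-((n : ℤ) + 1)) = ∑' n : ℕ, u n := tsum_congr fun n => hneg n
    rw [ha, hb]
    ring
  exact htsum ▸ hsummable.hasSum

/-- Inequality (2.4): with `M₁ = 2 ∑_{j=1}^∞ ω^{a_1 (j^{b_*}−1)}` and `b_* = inf_k b_k`,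
for every `d ≥ 1`, the family `(ω_h)_{h∈ℤ^d}` is summable and
`ω^{a_1} ln 2/2 ≤ (ln 2/2) ∑_{k=1}^d ω^{a_k} ≤ (1/2) ln(∑_{h∈ℤ^d} ω_h)
  ≤ (M₁/2) ∑_{k=1}^d ω^{a_k} ≤ d·M₁·ω^{a_1}/2`;
the middle quantity is `ln e^{avg}(0,d)` for the initial average-case error
`e^{avg}(0,d) = (∑_{h∈ℤ^d} ω_h)^{1/2}`. -/
theorem ineq_2_4 (ω : ℝ) (hω0 : 0 < ω) (hω1 : ω < 1)
    (a b : ℕ → ℝ) (ha_pos : ∀ k, 0 < a k) (ha_mono : Monotone a)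
    (hb_pos : ∀ k, 0 < b k) (hb_star : 0 < ⨅ k, b k)
    (d : ℕ) (hd : 1 ≤ d) :
    Summable (fun h : Fin d → ℤ => wfun ω a b d h) ∧
    ω ^ (a 0) * Real.log 2 / 2 ≤ (Real.log 2 / 2) * ∑ k ∈ Finset.range d, ω ^ (a k) ∧
    (Real.log 2 / 2) * ∑ k ∈ Finset.range d, ω ^ (a k) ≤
      (1 / 2) * Real.log (∑' h : Fin d → ℤ, wfun ω a b d h) ∧
    (1 / 2) * Real.log (∑' h : Fin d → ℤ, wfun ω a b d h) ≤
      ((2 * ∑' j : ℕ, ω ^ (a 0 * (((j : ℝ) + 1) ^ (⨅ k, b k) - 1))) / 2) *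
        ∑ k ∈ Finset.range d, ω ^ (a k) ∧
    ((2 * ∑' j : ℕ, ω ^ (a 0 * (((j : ℝ) + 1) ^ (⨅ k, b k) - 1))) / 2) *
        ∑ k ∈ Finset.range d, ω ^ (a k) ≤
      (d : ℝ) * (2 * ∑' j : ℕ, ω ^ (a 0 * (((j : ℝ) + 1) ^ (⨅ k, b k) - 1))) *
        ω ^ (a 0) / 2 := by
  set β : ℝ := ⨅ k, b k with hβ_def
  have hβ : 0 < β := hb_star
  have hβle : ∀ k, β ≤ b k := fun k =>
    ciInf_le ⟨0, by rintro x ⟨k, rfl⟩; exact (hb_pos k).le⟩ k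
  set Mh : ℝ := ∑' j : ℕ, ω ^ (a 0 * (((j : ℝ) + 1) ^ β - 1)) with hMh_def
  -- per-coordinate sums
  set Sk : ℕ → ℝ := fun k => 1 + 2 * ∑' j : ℕ, ω ^ (a k * ((j : ℝ) + 1) ^ (b k)) with hSk_def
  have hSk : ∀ k, HasSum (fun x : ℤ => ω ^ (a k * (|x| : ℝ) ^ (b k))) (Sk k) := fun k =>
    coord_hasSum hω0 hω1 (ha_pos k) (hb_pos k)
  have hTk_lb : ∀ k, ω ^ (a k) ≤ ∑' j : ℕ, ω ^ (a k * ((j : ℝ) + 1) ^ (b k)) := by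
    intro k
    have h := Summable.le_tsum (aux_summable hω0 hω1 (ha_pos k) (hb_pos k)) 0
      (fun j _ => Real.rpow_nonneg hω0.le _)
    simpa [Real.one_rpow] using h
  have hMh_summable : Summable (fun j : ℕ => ω ^ (a 0 * (((j : ℝ) + 1) ^ β - 1))) := by
    refine ((aux_summable hω0 hω1 (ha_pos 0) hβ).mul_right (ω ^ (-(a 0)))).congr fun j => ?_
    rw [← Real.rpow_add hω0]
    congr 1
    ring
  have hMh_nonneg : 0 ≤ Mh := tsum_nonneg fun j => Real.rpow_nonneg hω0.le _
  have hTk_ub : ∀ k, ∑' j : ℕ, ω ^ (a k * ((j : ℝ) + 1) ^ (b k)) ≤ ω ^ (a k) * Mh := by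
    intro k
    have hterm : ∀ j : ℕ, ω ^ (a k * ((j : ℝ) + 1) ^ (b k)) ≤
        ω ^ (a k) * ω ^ (a 0 * (((j : ℝ) + 1) ^ β - 1)) := by
      intro j
      have hj1 : (1 : ℝ) ≤ (j : ℝ) + 1 := by
        have := Nat.cast_nonneg (α := ℝ) j
        linarith
      have h2 : ((j : ℝ) + 1) ^ β ≤ ((j : ℝ) + 1) ^ (b k) :=
        Real.rpow_le_rpow_of_exponent_le hj1 (hβle k)
      have h3 : (1 : ℝ) ≤ ((j : ℝ) + 1) ^ β := by
        calc (1:ℝ) = ((j : ℝ) + 1) ^ (0:ℝ) := (Real.rpow_zero _).symm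
        _ ≤ ((j : ℝ) + 1) ^ β := Real.rpow_le_rpow_of_exponent_le hj1 hβ.le
      have hexp : a 0 * (((j : ℝ) + 1) ^ β - 1) ≤ a k * (((j : ℝ) + 1) ^ (b k) - 1) :=
        mul_le_mul (ha_mono (Nat.zero_le k)) (by linarith) (by linarith) (ha_pos k).le
      rw [show a k * ((j : ℝ) + 1) ^ (b k)
          = a k + a k * (((j : ℝ) + 1) ^ (b k) - 1) by ring, Real.rpow_add hω0]
      exact mul_le_mul_of_nonneg_left
        (Real.rpow_le_rpow_of_exponent_ge hω0 hω1.le hexp) (Real.rpow_nonneg hω0.le _)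
    calc ∑' j : ℕ, ω ^ (a k * ((j : ℝ) + 1) ^ (b k))
        ≤ ∑' j : ℕ, ω ^ (a k) * ω ^ (a 0 * (((j : ℝ) + 1) ^ β - 1)) :=
          Summable.tsum_le_tsum hterm (aux_summable hω0 hω1 (ha_pos k) (hb_pos k))
            (hMh_summable.mul_left _)
      _ = ω ^ (a k) * Mh := by rw [tsum_mul_left]
  have hS_lb : ∀ k, 1 + 2 * ω ^ (a k) ≤ Sk k := by
    intro k
    have := hTk_lb k
    simp only [hSk_def]
    linarith
  have hS_ub : ∀ k, Sk k ≤ 1 + 2 * (ω ^ (a k) * Mh) := by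
    intro k
    have := hTk_ub k
    simp only [hSk_def]
    linarith
  have hS_pos : ∀ k, 0 < Sk k := by
    intro k
    have h := hS_lb k
    have : 0 < ω ^ (a k) := Real.rpow_pos_of_pos hω0 _
    linarith
  -- product structure
  have hw : (fun h : Fin d → ℤ => wfun ω a b d h)
      = fun h => ∏ k : Fin d, ω ^ (a k.1 * (|h k| : ℝ) ^ (b k.1)) := by
    funext h
    unfold wfun korSum
    exact rpow_finset_sum hω0 _ _
  have hT : HasSum (fun h : Fin d → ℤ => ∏ k : Fin d, ω ^ (a k.1 * (|h k| : ℝ) ^ (b k.1)))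
      (∏ k : Fin d, Sk k.1) :=
    hasSum_pi_prod d (fun k x => ω ^ (a k.1 * (|x| : ℝ) ^ (b k.1))) (fun k => Sk k.1)
      (fun k x => Real.rpow_nonneg hω0.le _) (fun k => hSk k.1)
  have hsummable : Summable (fun h : Fin d → ℤ => wfun ω a b d h) := by
    rw [hw]; exact hT.summable
  have htsum : (∑' h : Fin d → ℤ, wfun ω a b d h) = ∏ k : Fin d, Sk k.1 := by
    rw [hw]; exact hT.tsum_eq
  have hlogT : Real.log (∑' h : Fin d → ℤ, wfun ω a b d h) = ∑ k : Fin d, Real.log (Sk k.1) := by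
    rw [htsum]
    exact Real.log_prod (fun k _ => (hS_pos k.1).ne')
  -- log bounds per coordinate
  have hlog_lb : ∀ k, ω ^ (a k) * Real.log 2 ≤ Real.log (Sk k) := by
    intro k
    have hx0 : 0 < ω ^ (a k) := Real.rpow_pos_of_pos hω0 _
    have hx1 : ω ^ (a k) < 1 := Real.rpow_lt_one hω0.le hω1 (ha_pos k)
    have h2x : ((1:ℝ) + 1) ^ (ω ^ (a k)) < 1 + ω ^ (a k) * 1 :=
      rpow_one_add_lt_one_add_mul_self (by norm_num) one_ne_zero hx0 hx1
    have h2x' : (2:ℝ) ^ (ω ^ (a k)) ≤ Sk k := by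
      have := hS_lb k
      norm_num at h2x
      linarith
    calc ω ^ (a k) * Real.log 2 = Real.log ((2:ℝ) ^ (ω ^ (a k))) :=
          (Real.log_rpow (by norm_num) _).symm
      _ ≤ Real.log (Sk k) :=
          Real.log_le_log (Real.rpow_pos_of_pos (by norm_num) _) h2x'
  have hlog_ub : ∀ k, Real.log (Sk k) ≤ 2 * Mh * ω ^ (a k) := by
    intro k
    have h1 := Real.log_le_sub_one_of_pos (hS_pos k)
    have h2 := hS_ub k
    linarith
  -- sums over coordinates
  have hrange : ∑ k : Fin d, ω ^ (a k.1) = ∑ k ∈ Finset.range d, ω ^ (a k) :=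
    Fin.sum_univ_eq_sum_range (fun k => ω ^ (a k)) d
  have hsum_lb : Real.log 2 * ∑ k ∈ Finset.range d, ω ^ (a k)
      ≤ ∑ k : Fin d, Real.log (Sk k.1) := by
    rw [← hrange, Finset.mul_sum]
    exact Finset.sum_le_sum fun k _ => by have := hlog_lb k.1; linarith
  have hsum_ub : ∑ k : Fin d, Real.log (Sk k.1)
      ≤ 2 * Mh * ∑ k ∈ Finset.range d, ω ^ (a k) := by
    rw [← hrange, Finset.mul_sum]
    exact Finset.sum_le_sum fun k _ => hlog_ub k.1
  have hSig_nonneg : ∀ k ∈ Finset.range d, (0:ℝ) ≤ ω ^ (a k) :=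
    fun k _ => Real.rpow_nonneg hω0.le _
  have hSig_lb : ω ^ (a 0) ≤ ∑ k ∈ Finset.range d, ω ^ (a k) :=
    Finset.single_le_sum hSig_nonneg (Finset.mem_range.mpr hd)
  have hSig_ub : ∑ k ∈ Finset.range d, ω ^ (a k) ≤ (d : ℝ) * ω ^ (a 0) := by
    have h := Finset.sum_le_card_nsmul (Finset.range d) (fun k => ω ^ (a k)) (ω ^ (a 0))
      (fun k _ => Real.rpow_le_rpow_of_exponent_ge hω0 hω1.le (ha_mono (Nat.zero_le k)))
    simpa [nsmul_eq_mul] using h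
  have hlog2 : 0 ≤ Real.log 2 := Real.log_nonneg (by norm_num)
  refine ⟨hsummable, ?_, ?_, ?_, ?_⟩
  · nlinarith
  · rw [hlogT]; linarith
  · rw [hlogT]; linarith
  · nlinarith [mul_nonneg hMh_nonneg (sub_nonneg.mpr hSig_ub)]
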